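/- arXiv:2407.04410 — 3 statements merged into one kernel-verified Lean document; each statement's English description precedes it below -/
import Mathlib

section
/- Let G be a locally compact Abelian group, H an open subgroup of G, Ω ⊆ H, and φ: H → ℝ a continuous positive definite function with φ(0)=1, φ ∈ L¹(H), and supp φ₊ ⊆ Ω. Then the trivial extension φ̃: G → ℝ (equal to φ on H and 0 off H) is continuous, positive definite, satisfies φ̃(0)=1, φ̃ ∈ L¹(G), and supp φ̃₊ ⊆ Ω. -/
open MeasureTheory Filter Topology Complex ComplexOrder Pointwise Classical

/-- A complex-valued function on an Abelian group is positive definite. -/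
def IsPosDefC {G : Type*} [AddCommGroup G] (f : G → ℂ) : Prop :=
  ∀ (n : ℕ) (c : Fin n → ℂ) (g : Fin n → G),
    0 ≤ ∑ i, ∑ j, c i * (starRingEnd ℂ) (c j) * f (g i - g j)

/-- A real-valued function on an Abelian group is positive definite. -/
def IsPosDefR {G : Type*} [AddCommGroup G] (f : G → ℝ) : Prop :=
  ∀ (n : ℕ) (c : Fin n → ℂ) (g : Fin n → G),
    0 ≤ ∑ i, ∑ j, c i * (starRingEnd ℂ) (c j) * (f (g i - g j) : ℂ)

theorem trivial_extension_in_gclass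
    {G : Type*} [AddCommGroup G] [TopologicalSpace G] [IsTopologicalAddGroup G]
    [LocallyCompactSpace G] [T2Space G] [MeasurableSpace G] [BorelSpace G]
    (μ : Measure G) [μ.IsAddHaarMeasure]
    (H : AddSubgroup G) (hH : IsOpen (H : Set G))
    (Ω : Set G) (hΩH : Ω ⊆ (H : Set G))
    (φ : H → ℝ) (hφ_cont : Continuous φ) (hφ_pd : IsPosDefR φ) (hφ0 : φ 0 = 1)
    (hφ_int : Integrable φ (μ.comap (Subtype.val : H → G)))
    (hφ_supp : (Subtype.val : H → G) '' closure {x : H | max (φ x) 0 ≠ 0} ⊆ Ω)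
    (φext : G → ℝ) (hext : ∀ g : G, φext g = if h : g ∈ H then φ ⟨g, h⟩ else 0) :
    Continuous φext ∧ IsPosDefR φext ∧ φext 0 = 1 ∧ Integrable φext μ ∧
      closure {g : G | max (φext g) 0 ≠ 0} ⊆ Ω := by
  have hHc : IsClosed (H : Set G) := H.isClosed_of_isOpen hH
  have hHm : MeasurableSet (H : Set G) := hH.measurableSet
  have hOnH : ∀ (x : G) (hx : x ∈ H), φext x = φ ⟨x, hx⟩ := by
    intro x hx; rw [hext x, dif_pos hx]
  have hOffH : ∀ x ∉ H, φext x = 0 := by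
    intro x hx; rw [hext x, dif_neg hx]
  -- continuity
  have hcont : Continuous φext := by
    rw [continuous_iff_continuousAt]
    intro x
    by_cases hx : x ∈ H
    · have h1 : ContinuousOn φext (H : Set G) := by
        rw [continuousOn_iff_continuous_restrict]
        have : (H : Set G).domRestrict φext = φ := by
          funext y; exact hOnH y.1 y.2
        rw [this]; exact hφ_cont
      exact h1.continuousAt (hH.mem_nhds hx)
    · have h1 : ContinuousOn φext ((H : Set G)ᶜ) := by
        apply ContinuousOn.congr continuousOn_const
        intro y hy; exact hOffH y hy
      exact h1.continuousAt (hHc.isOpen_compl.mem_nhds hx)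
  -- pos def
  have hpd : IsPosDefR φext := by
    intro n c g
    classical
    set π : G → G ⧸ H := QuotientAddGroup.mk with hπ
    have hmem : ∀ i, g i - Quotient.out (π (g i)) ∈ H := by
      intro i
      have h1 : π (Quotient.out (π (g i))) = π (g i) := Quotient.out_eq _
      have h2 : π (g i - Quotient.out (π (g i))) = 0 := by
        rw [hπ]
        rw [QuotientAddGroup.mk_sub]
        rw [show (QuotientAddGroup.mk (Quotient.out (π (g i))) : G ⧸ H) = π (g i) from h1,
          sub_self]
      exact (QuotientAddGroup.eq_zero_iff _).mp h2
    set h : Fin n → H := fun i => ⟨g i - Quotient.out (π (g i)), hmem i⟩ with hh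
    set Q : Finset (G ⧸ H) := Finset.image (fun i => π (g i)) Finset.univ with hQ
    have key : ∀ i j, c i * (starRingEnd ℂ) (c j) * (φext (g i - g j) : ℂ)
        = ∑ q ∈ Q,
            (if π (g i) = q then c i else 0) * (starRingEnd ℂ) (if π (g j) = q then c j else 0)
              * (φ (h i - h j) : ℂ) := by
      intro i j
      by_cases hij : π (g i) = π (g j)
      · have hsH : g i - g j ∈ H := by
          have : π (g i - g j) = 0 := by
            rw [hπ, QuotientAddGroup.mk_sub]
            rw [show (QuotientAddGroup.mk (g i) : G ⧸ H) = π (g i) from rfl,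
              show (QuotientAddGroup.mk (g j) : G ⧸ H) = π (g j) from rfl, hij, sub_self]
          exact (QuotientAddGroup.eq_zero_iff _).mp this
        have hdiff : h i - h j = ⟨g i - g j, hsH⟩ := by
          apply Subtype.ext
          show (g i - Quotient.out (π (g i))) - (g j - Quotient.out (π (g j))) = g i - g j
          rw [hij]; abel
        have hval : φext (g i - g j) = φ (h i - h j) := by
          rw [hOnH _ hsH, hdiff]
        rw [hval]
        rw [Finset.sum_eq_single (π (g i))]
        · simp [hij]
        · intro q _ hq
          simp [Ne.symm hq]
        · intro hnot
          exact absurd (Finset.mem_image_of_mem _ (Finset.mem_univ i)) hnot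
      · have hsH : g i - g j ∉ H := by
          intro hmem'
          apply hij
          have h0' : π (g i - g j) = 0 := (QuotientAddGroup.eq_zero_iff _).mpr hmem'
          have : π (g i) - π (g j) = 0 := by
            rw [← h0', hπ, QuotientAddGroup.mk_sub]
          exact sub_eq_zero.mp this
        rw [hOffH _ hsH]
        rw [Finset.sum_congr rfl (fun q _ => ?_), Finset.sum_const_zero]
        · simp
        · by_cases h1 : π (g i) = q <;> by_cases h2 : π (g j) = q
          · exact absurd (h1.trans h2.symm) hij
          all_goals simp [h1, h2]
    calc (0:ℂ) ≤ ∑ q ∈ Q, ∑ i, ∑ j,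
          (if π (g i) = q then c i else 0) * (starRingEnd ℂ) (if π (g j) = q then c j else 0)
            * (φ (h i - h j) : ℂ) := by
          apply Finset.sum_nonneg
          intro q _
          exact hφ_pd n (fun i => if π (g i) = q then c i else 0) h
      _ = ∑ i, ∑ j, c i * (starRingEnd ℂ) (c j) * (φext (g i - g j) : ℂ) := by
          rw [Finset.sum_comm]
          apply Finset.sum_congr rfl; intro i _
          rw [Finset.sum_comm]
          apply Finset.sum_congr rfl; intro j _
          exact (key i j).symm
  -- φext 0 = 1
  have h0 : φext 0 = 1 := by rw [hOnH 0 H.zero_mem]; exact hφ0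
  -- integrable
  have hint : Integrable φext μ := by
    have hemb := MeasurableEmbedding.subtype_coe hHm
    have h1 : Integrable ((fun x : G => φext x) ∘ (Subtype.val : ↥(H : Set G) → G))
        (μ.comap (Subtype.val : ↥(H : Set G) → G)) := by
      apply hφ_int.congr
      filter_upwards with x
      exact (hOnH x.1 x.2).symm
    have h2 : IntegrableOn φext (H : Set G) μ := by
      rw [IntegrableOn, ← map_comap_subtype_coe hHm, hemb.integrable_map_iff]
      exact h1
    have h3 : φext = (H : Set G).indicator φext := by
      funext x
      by_cases hx : x ∈ H
      · rw [Set.indicator_of_mem hx]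
      · rw [Set.indicator_of_notMem hx, hOffH x hx]
    rw [h3, integrable_indicator_iff hHm]
    exact h2
  -- support
  have hsupp : closure {g : G | max (φext g) 0 ≠ 0} ⊆ Ω := by
    have hsetEq : {g : G | max (φext g) 0 ≠ 0}
        = (Subtype.val : H → G) '' {x : H | max (φ x) 0 ≠ 0} := by
      ext x
      simp only [Set.mem_setOf_eq, Set.mem_image]
      constructor
      · intro hx
        have hxH : x ∈ H := by
          by_contra hxn
          rw [hOffH x hxn] at hx; simp at hx
        exact ⟨⟨x, hxH⟩, by rw [← hOnH x hxH]; exact hx, rfl⟩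
      · rintro ⟨y, hy, rfl⟩
        rw [hOnH y.1 y.2]
        simpa using hy
    rw [hsetEq]
    have hce : IsClosedEmbedding (Subtype.val : H → G) := hHc.isClosedEmbedding_subtypeVal
    rw [hce.closure_image_eq]
    exact hφ_supp
  exact ⟨hcont, hpd, h0, hint, hsupp⟩
end

section
/- Let G be a locally compact Abelian group, f a continuous positive definite function on G, V a symmetric neighbourhood of 0 with compact closure, and χ := 1_V / λ_G(V). Then for all x ∈ G: |f(x) − (f * χ)(x)|² ≤ 2 f(0) λ_G(V)⁻¹ ∫_V (f(0) − Re f(g)) dλ_G(g). -/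
open MeasureTheory Filter Topology Complex ComplexOrder Pointwise

section aux
variable {G : Type*} [AddCommGroup G] {f : G → ℂ}

lemma pd_zero_im (hf : IsPosDefC f) : (f 0).im = 0 := by
  have h := hf 1 ![1] ![0]
  simp [Fin.sum_univ_one] at h
  rw [Complex.le_def] at h
  simpa using h.2.symm

lemma pd_zero_re (hf : IsPosDefC f) : 0 ≤ (f 0).re := by
  have h := hf 1 ![1] ![0]
  simp [Fin.sum_univ_one] at h
  rw [Complex.le_def] at h
  simpa using h.1

lemma pd_neg (hf : IsPosDefC f) (x : G) : f (-x) = (starRingEnd ℂ) (f x) := by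
  have h0 := pd_zero_im hf
  have h1 := hf 2 ![1, 1] ![0, x]
  have h2 := hf 2 ![1, Complex.I] ![0, x]
  simp [Fin.sum_univ_two, Complex.le_def] at h1 h2
  apply Complex.ext
  · have := h2.2
    simp [h0] at this
    simp only [Complex.conj_re]
    linarith
  · have := h1.2
    simp [h0] at this
    simp only [Complex.conj_im]
    linarith

lemma pd_re_le (hf : IsPosDefC f) (x : G) : (f x).re ≤ (f 0).re := by
  have h := hf 2 ![1, -1] ![0, x]
  simp [Fin.sum_univ_two, Complex.le_def, pd_neg hf] at h
  have := h.1
  linarith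

lemma pd_krein (hf : IsPosDefC f) (x y : G) :
    ‖f x - f y‖ ^ 2 ≤ 2 * (f 0).re * ((f 0).re - (f (x - y)).re) := by
  have h0 := pd_zero_im hf
  have ha := pd_zero_re hf
  have hD : (f (x - y)).re ≤ (f 0).re := pd_re_le hf (x - y)
  have hneg := pd_neg hf
  set n := (f x - f y).re ^ 2 + (f x - f y).im ^ 2 with hn
  have hn0 : 0 ≤ n := by positivity
  have habs : ‖f x - f y‖ ^ 2 = n := by
    rw [Complex.sq_norm, Complex.normSq_apply, hn]; ring
  have key : ∀ s : ℝ, 0 ≤ ((f 0).re * n) * (s * s)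
      + (-(2 * n)) * s + 2 * ((f 0).re - (f (x - y)).re) := by
    intro s
    have h := hf 3 ![((-s : ℝ) : ℂ) * (f x - f y), 1, -1] ![0, x, y]
    have hre : (f (y - x)).re = (f (x - y)).re := by rw [← neg_sub x y, hneg]; simp
    simp [Fin.sum_univ_three, Complex.le_def, hneg, h0] at h
    have h1 := h.1
    rw [hre] at h1
    simp only [hn, Complex.sub_re, Complex.sub_im]
    nlinarith [h1]
  have hd := discrim_le_zero key
  rw [discrim] at hd
  rw [habs]
  rcases eq_or_lt_of_le hn0 with hz | hz
  · rw [← hz]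
    have : 0 ≤ (f 0).re - (f (x - y)).re := by linarith
    positivity
  · nlinarith [hd, hz]
end aux

theorem posDef_convolution_approx_inequality
    {G : Type*} [AddCommGroup G] [TopologicalSpace G] [IsTopologicalAddGroup G]
    [LocallyCompactSpace G] [T2Space G] [MeasurableSpace G] [BorelSpace G]
    (μ : Measure G) [μ.IsAddHaarMeasure]
    (f : G → ℂ) (hf_cont : Continuous f) (hf_pd : IsPosDefC f)
    (V : Set G) (hV_symm : V = -V) (hV_nhds : V ∈ 𝓝 (0 : G))
    (hV_cpt : IsCompact (closure V)) (hV_meas : MeasurableSet V)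
    (χ : G → ℝ) (hχ : χ = Set.indicator V (fun _ => ((μ V).toReal)⁻¹)) :
    ∀ x : G,
      ‖f x - ∫ y, f y * (χ (x - y) : ℂ) ∂μ‖ ^ 2 ≤
        2 * (f 0).re * ((μ V).toReal)⁻¹ *
          ∫ g in V, ((f 0).re - (f g).re) ∂μ := by
  intro x
  set a := (f 0).re with ha
  have ha0 : 0 ≤ a := pd_zero_re hf_pd
  set m := (μ V).toReal with hm
  have hVfin : μ V ≠ ⊤ := ((measure_mono subset_closure).trans_lt hV_cpt.measure_lt_top).ne
  have hVpos : 0 < μ V := μ.measure_pos_of_mem_nhds hV_nhds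
  have hm0 : 0 < m := ENNReal.toReal_pos hVpos.ne' hVfin
  -- integrability of continuous functions on V
  have intC : ∀ F : G → ℂ, Continuous F → IntegrableOn F V μ := fun F hF =>
    (hF.continuousOn.integrableOn_compact hV_cpt).mono_set subset_closure
  have intR : ∀ F : G → ℝ, Continuous F → IntegrableOn F V μ := fun F hF =>
    (hF.continuousOn.integrableOn_compact hV_cpt).mono_set subset_closure
  set u : G → ℂ := fun g => f x - f (x + g) with hu
  have hu_cont : Continuous u := continuous_const.sub (hf_cont.comp (continuous_const.add continuous_id))
  have hu_int : IntegrableOn u V μ := intC u hu_cont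
  have hnu_int : IntegrableOn (fun g => ‖u g‖) V μ := hu_int.norm
  have hnu2_int : IntegrableOn (fun g => ‖u g‖ ^ 2) V μ :=
    intR _ ((hu_cont.norm).pow 2)
  have hrhs_int : IntegrableOn (fun g => a - (f g).re) V μ :=
    intR _ (continuous_const.sub (Complex.continuous_re.comp hf_cont))
  -- compute the convolution
  have hχsymm : ∀ g : G, χ (-g) = χ g := by
    intro g
    rw [hχ]
    by_cases h : g ∈ V
    · have h' : -g ∈ V := by rw [hV_symm]; simpa using h
      simp [Set.indicator_apply, h, h']
    · have h' : -g ∉ V := fun hc => h (by rw [hV_symm] at hc; simpa using hc)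
      simp [Set.indicator_apply, h, h']
  have hconv : (∫ y, f y * (χ (x - y) : ℂ) ∂μ) = (∫ g in V, f (x + g) ∂μ) * ((m : ℂ))⁻¹ := by
    rw [← integral_add_left_eq_self (fun y => f y * (χ (x - y) : ℂ)) x]
    have : ∀ g : G, f (x + g) * (χ (x - (x + g)) : ℂ)
        = Set.indicator V (fun g => f (x + g) * ((m : ℂ))⁻¹) g := by
      intro g
      have hxg : x - (x + g) = -g := by abel
      rw [hxg, hχsymm g, hχ]
      by_cases h : g ∈ V <;> simp [Set.indicator_apply, h, hm]
    simp_rw [this]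
    rw [integral_indicator hV_meas, integral_mul_const]
  have hfx : f x = (∫ _ in V, f x ∂μ) * ((m : ℂ))⁻¹ := by
    rw [setIntegral_const, Complex.real_smul, measureReal_def, ← hm]
    have : (m : ℂ) ≠ 0 := by exact_mod_cast hm0.ne'
    field_simp
  have hdiff : f x - (∫ y, f y * (χ (x - y) : ℂ) ∂μ)
      = (∫ g in V, u g ∂μ) * ((m : ℂ))⁻¹ := by
    rw [hconv, hfx]
    rw [← sub_mul]
    congr 1
    rw [← integral_sub (integrableOn_const (C := f x) hVfin)
      (intC (fun g => f (x + g)) (hf_cont.comp (continuous_const.add continuous_id)))]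
  -- notation
  set A := ‖∫ g in V, u g ∂μ‖ with hA
  set I := ∫ g in V, ‖u g‖ ∂μ with hI
  set J := ∫ g in V, ‖u g‖ ^ 2 ∂μ with hJ
  set K := ∫ g in V, (a - (f g).re) ∂μ with hK
  have hA0 : 0 ≤ A := norm_nonneg _
  have hAI : A ≤ I := by
    rw [hA, hI]
    exact norm_integral_le_integral_norm _
  have hI0 : 0 ≤ I := le_trans hA0 hAI
  -- Cauchy-Schwarz
  have hCS : I ^ 2 ≤ m * J := by
    set c := I / m with hc
    have hcm : c * m = I := by rw [hc, div_mul_cancel₀ _ hm0.ne']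
    have hexp : ∫ g in V, (‖u g‖ - c) ^ 2 ∂μ = J - 2 * c * I + c ^ 2 * m := by
      have hptw : ∀ g : G, (‖u g‖ - c) ^ 2 = (‖u g‖ ^ 2 - (2 * c) * ‖u g‖) + c ^ 2 := by
        intro g; ring
      simp_rw [hptw]
      have i2 : IntegrableOn (fun g => 2 * c * ‖u g‖) V μ := hnu_int.const_mul _
      have i1 : IntegrableOn (fun g => ‖u g‖ ^ 2 - 2 * c * ‖u g‖) V μ := hnu2_int.sub i2
      rw [integral_add i1 (integrableOn_const hVfin),
        integral_sub hnu2_int i2, integral_const_mul,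
        setIntegral_const, smul_eq_mul, measureReal_def, ← hm, ← hI, ← hJ]
      ring
    have hpos : 0 ≤ ∫ g in V, (‖u g‖ - c) ^ 2 ∂μ := integral_nonneg fun g => sq_nonneg _
    rw [hexp] at hpos
    nlinarith [hpos, hm0, hcm, sq_nonneg c]
  -- pointwise Krein bound
  have hpt : ∀ g : G, ‖u g‖ ^ 2 ≤ 2 * a * (a - (f g).re) := by
    intro g
    have h := pd_krein hf_pd x (x + g)
    have hxg : x - (x + g) = -g := by abel
    rw [hxg, pd_neg hf_pd] at h
    simpa [Complex.conj_re, ha] using h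
  have hJK : J ≤ 2 * a * K := by
    have h1 : J ≤ ∫ g in V, 2 * a * (a - (f g).re) ∂μ := by
      refine setIntegral_mono_on hnu2_int (hrhs_int.const_mul (2 * a)) hV_meas ?_
      exact fun g _ => hpt g
    rwa [integral_const_mul, ← hK] at h1
  -- finish
  rw [hdiff]
  rw [norm_mul, norm_inv, Complex.norm_real, Real.norm_eq_abs, _root_.abs_of_pos hm0, ← hA]
  have hb0 : (0:ℝ) < m⁻¹ := inv_pos.2 hm0
  have hA2 : A ^ 2 ≤ I ^ 2 := pow_le_pow_left₀ hA0 hAI 2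
  calc (A * m⁻¹) ^ 2 = A ^ 2 * (m⁻¹) ^ 2 := by ring
    _ ≤ (m * J) * (m⁻¹) ^ 2 := mul_le_mul_of_nonneg_right (hA2.trans hCS) (sq_nonneg _)
    _ = J * m⁻¹ := by field_simp [hm0.ne']
    _ ≤ (2 * a * K) * m⁻¹ := mul_le_mul_of_nonneg_right hJK hb0.le
    _ = 2 * a * m⁻¹ * K := by ring
end

section
/- Let G be a locally compact Abelian group with Haar measure λ_G, Ω a closed set of finite measure, and (fₙ) a sequence of continuous functions G → ℝ with |fₙ| ≤ 1, supp (fₙ)₊ ⊆ Ω, and each fₙ integrable with ∫ fₙ dλ_G ≥ 0. If fₙ → f pointwise almost everywhere with f continuous, then supp f₊ ⊆ Ω, f ∈ L¹(G), and ∫_G f dλ_G ≥ limsupₙ ∫_G fₙ dλ_G. -/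
open MeasureTheory Filter Topology Complex ComplexOrder Pointwise

theorem limit_function_properties
    {G : Type*} [AddCommGroup G] [TopologicalSpace G] [IsTopologicalAddGroup G]
    [LocallyCompactSpace G] [T2Space G] [MeasurableSpace G] [BorelSpace G]
    (μ : Measure G) [μ.IsAddHaarMeasure]
    (Ω : Set G) (hΩ_closed : IsClosed Ω) (hΩfin : μ Ω < ⊤)
    (fseq : ℕ → G → ℝ) (hseq_cont : ∀ n, Continuous (fseq n))
    (hseq_bd : ∀ n g, |fseq n g| ≤ 1)
    (hseq_supp : ∀ n, closure {g : G | max (fseq n g) 0 ≠ 0} ⊆ Ω)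
    (hseq_int : ∀ n, Integrable (fseq n) μ)
    (hseq_nonneg : ∀ n, 0 ≤ ∫ g, fseq n g ∂μ)
    (f : G → ℝ) (hf_cont : Continuous f)
    (hae : ∀ᵐ g ∂μ, Tendsto (fun n => fseq n g) atTop (𝓝 (f g))) :
    closure {g : G | max (f g) 0 ≠ 0} ⊆ Ω ∧ Integrable f μ ∧
      Filter.limsup (fun n => ∫ g, fseq n g ∂μ) atTop ≤ ∫ g, f g ∂μ := by
  classical
  have hΩm : MeasurableSet Ω := hΩ_closed.measurableSet
  -- each fseq n is ≤ 0 outside Ω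
  have hout : ∀ n g, g ∉ Ω → fseq n g ≤ 0 := by
    intro n g hg
    by_contra h
    push_neg at h
    exact hg (hseq_supp n (subset_closure (show max (fseq n g) 0 ≠ 0 by
      rw [max_eq_left h.le]; exact h.ne')))
  -- open null sets are empty
  have hnull : ∀ U : Set G, IsOpen U → μ U = 0 → U = ∅ := by
    intro U hU h0
    by_contra h
    exact absurd h0 (hU.measure_pos μ (Set.nonempty_iff_ne_empty.2 h)).ne'
  -- f ≤ 0 outside Ω
  have hf_out : ∀ g, g ∉ Ω → f g ≤ 0 := by
    intro g hg
    by_contra h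
    push_neg at h
    have hV : IsOpen (Ωᶜ ∩ {g | 0 < f g}) :=
      (hΩ_closed.isOpen_compl).inter (isOpen_lt continuous_const hf_cont)
    have h0 : μ (Ωᶜ ∩ {g | 0 < f g}) = 0 := by
      have hsub : ∀ᵐ g ∂μ, g ∉ (Ωᶜ ∩ {g | 0 < f g}) := by
        filter_upwards [hae] with g hgl
        rintro ⟨hg1, hg2⟩
        have : f g ≤ 0 := le_of_tendsto hgl (Filter.Eventually.of_forall fun n => hout n g hg1)
        exact absurd hg2 (not_lt.2 this)
      rw [ae_iff] at hsub; simpa only [not_not, Set.setOf_mem_eq] using hsub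
    have heq := hnull _ hV h0
    have : g ∈ Ωᶜ ∩ {g | 0 < f g} := ⟨hg, h⟩
    rw [heq] at this
    exact this
  -- |f| ≤ 1 everywhere
  have hf_bd : ∀ g, |f g| ≤ 1 := by
    intro g
    by_contra h
    push_neg at h
    have hV : IsOpen {g | 1 < |f g|} := isOpen_lt continuous_const hf_cont.abs
    have h0 : μ {g | 1 < |f g|} = 0 := by
      have hsub : ∀ᵐ g ∂μ, ¬ (1 < |f g|) := by
        filter_upwards [hae] with g hgl
        exact not_lt.2 (le_of_tendsto hgl.abs (Filter.Eventually.of_forall fun n => hseq_bd n g))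
      simpa [ae_iff] using hsub
    have heq := hnull _ hV h0
    have : g ∈ {g | 1 < |f g|} := h
    rw [heq] at this
    exact this
  -- support of positive part of f
  have hsupp : closure {g : G | max (f g) 0 ≠ 0} ⊆ Ω := by
    refine closure_minimal ?_ hΩ_closed
    intro g hg
    by_contra hgΩ
    exact hg (max_eq_right (hf_out g hgΩ))
  refine ⟨hsupp, ?_⟩
  -- the indicator bound
  have hind : Integrable (Ω.indicator (fun _ => (1:ℝ))) μ := by
    rw [integrable_indicator_iff hΩm]
    exact integrableOn_const hΩfin.ne
  have hfp_le : ∀ n g, ‖max (fseq n g) 0‖ ≤ Ω.indicator (fun _ => (1:ℝ)) g := by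
    intro n g
    rw [Real.norm_eq_abs, _root_.abs_of_nonneg (le_max_right _ _)]
    by_cases hg : g ∈ Ω
    · simp only [Set.indicator_of_mem hg]
      exact max_le ((le_abs_self _).trans (hseq_bd n g)) zero_le_one
    · simp only [Set.indicator_of_notMem hg]
      rw [max_eq_right (hout n g hg)]
  have hFp_le : ∀ g, ‖max (f g) 0‖ ≤ Ω.indicator (fun _ => (1:ℝ)) g := by
    intro g
    rw [Real.norm_eq_abs, _root_.abs_of_nonneg (le_max_right _ _)]
    by_cases hg : g ∈ Ω
    · simp only [Set.indicator_of_mem hg]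
      exact max_le ((le_abs_self _).trans (hf_bd g)) zero_le_one
    · simp only [Set.indicator_of_notMem hg]
      rw [max_eq_right (hf_out g hg)]
  -- positive part of f is integrable
  have hFp_int : Integrable (fun g => max (f g) 0) μ :=
    Integrable.mono' hind (hf_cont.max continuous_const).aestronglyMeasurable
      (Filter.Eventually.of_forall hFp_le)
  -- dominated convergence for the positive parts
  have hA : Tendsto (fun n => ∫ g, max (fseq n g) 0 ∂μ) atTop
      (𝓝 (∫ g, max (f g) 0 ∂μ)) := by
    refine tendsto_integral_of_dominated_convergence _
      (fun n => ((hseq_cont n).max continuous_const).aestronglyMeasurable) hind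
      (fun n => Filter.Eventually.of_forall (hfp_le n)) ?_
    filter_upwards [hae] with g hg
    exact hg.max tendsto_const_nhds
  set C : ℝ := (μ Ω).toReal with hC
  -- each ∫ fp n ≤ C
  have ha_le : ∀ n, ∫ g, max (fseq n g) 0 ∂μ ≤ C := by
    intro n
    calc ∫ g, max (fseq n g) 0 ∂μ ≤ ∫ g, Ω.indicator (fun _ => (1:ℝ)) g ∂μ := by
          refine integral_mono (hseq_int n).pos_part hind fun g => ?_
          have := hfp_le n g
          rwa [Real.norm_eq_abs, _root_.abs_of_nonneg (le_max_right _ _)] at this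
      _ = C := by rw [integral_indicator_const (1:ℝ) hΩm]; simp [hC, measureReal_def]
  -- each ∫ fm n ≤ C
  have hsplit : ∀ n, ∫ g, fseq n g ∂μ
      = (∫ g, max (fseq n g) 0 ∂μ) - ∫ g, max (-fseq n g) 0 ∂μ := by
    intro n
    rw [← integral_sub (hseq_int n).pos_part (hseq_int n).neg_part]
    exact integral_congr_ae (Filter.Eventually.of_forall fun g =>
      (max_zero_sub_max_neg_zero_eq_self (fseq n g)).symm)
  have hb_le : ∀ n, ∫ g, max (-fseq n g) 0 ∂μ ≤ C := by
    intro n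
    have h1 : ∫ g, max (-fseq n g) 0 ∂μ
        = (∫ g, max (fseq n g) 0 ∂μ) - ∫ g, fseq n g ∂μ := by
      rw [hsplit n]; ring
    rw [h1]
    have := hseq_nonneg n
    linarith [ha_le n]
  have hb_nonneg : ∀ n, 0 ≤ ∫ g, max (-fseq n g) 0 ∂μ := fun n =>
    integral_nonneg fun g => le_max_right _ _
  -- Fatou for the negative parts (in ℝ≥0∞)
  have hfm_lint : ∀ n, ∫⁻ g, ENNReal.ofReal (max (-fseq n g) 0) ∂μ
      = ENNReal.ofReal (∫ g, max (-fseq n g) 0 ∂μ) :=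
    fun n => (ofReal_integral_eq_lintegral_ofReal (hseq_int n).neg_part
      (Filter.Eventually.of_forall fun g => le_max_right _ _)).symm
  have hfatou : ∫⁻ g, ENNReal.ofReal (max (-f g) 0) ∂μ
      ≤ liminf (fun n => ENNReal.ofReal (∫ g, max (-fseq n g) 0 ∂μ)) atTop := by
    have hcong : ∫⁻ g, ENNReal.ofReal (max (-f g) 0) ∂μ
        = ∫⁻ g, liminf (fun n => ENNReal.ofReal (max (-fseq n g) 0)) atTop ∂μ := by
      refine lintegral_congr_ae ?_
      filter_upwards [hae] with g hg
      have ht : Tendsto (fun n => ENNReal.ofReal (max (-fseq n g) 0)) atTop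
          (𝓝 (ENNReal.ofReal (max (-f g) 0))) :=
        (ENNReal.continuous_ofReal.tendsto _).comp (hg.neg.max tendsto_const_nhds)
      exact ht.liminf_eq.symm
    rw [hcong]
    calc ∫⁻ g, liminf (fun n => ENNReal.ofReal (max (-fseq n g) 0)) atTop ∂μ
        ≤ liminf (fun n => ∫⁻ g, ENNReal.ofReal (max (-fseq n g) 0) ∂μ) atTop :=
          lintegral_liminf_le fun n => ENNReal.measurable_ofReal.comp
            ((hseq_cont n).neg.max continuous_const).measurable
      _ = _ := by simp only [hfm_lint]
  have hliminf_le : liminf (fun n => ENNReal.ofReal (∫ g, max (-fseq n g) 0 ∂μ)) atTop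
      ≤ ENNReal.ofReal C :=
    liminf_le_of_frequently_le' (Filter.Eventually.of_forall
      (fun n => ENNReal.ofReal_le_ofReal (hb_le n))).frequently
  -- negative part of f is integrable
  have hFm_int : Integrable (fun g => max (-f g) 0) μ := by
    refine ⟨(hf_cont.neg.max continuous_const).aestronglyMeasurable, ?_⟩
    refine (hasFiniteIntegral_iff_ofReal
      (Filter.Eventually.of_forall fun g => le_max_right _ _)).2 ?_
    exact lt_of_le_of_lt (hfatou.trans hliminf_le) ENNReal.ofReal_lt_top
  have hf_eq : f = fun g => max (f g) 0 - max (-f g) 0 :=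
    funext fun g => (max_zero_sub_max_neg_zero_eq_self (f g)).symm
  have hf_int : Integrable f μ := by
    rw [hf_eq]; exact hFp_int.sub hFm_int
  refine ⟨hf_int, ?_⟩
  -- the limsup inequality
  set A : ℝ := ∫ g, max (f g) 0 ∂μ with hAdef
  set B : ℝ := ∫ g, max (-f g) 0 ∂μ with hBdef
  have hintf : ∫ g, f g ∂μ = A - B := by
    conv_lhs => rw [show (fun g => f g) = f from rfl, hf_eq]
    rw [integral_sub hFp_int hFm_int]
  have hBofReal : ENNReal.ofReal B = ∫⁻ g, ENNReal.ofReal (max (-f g) 0) ∂μ :=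
    ofReal_integral_eq_lintegral_ofReal hFm_int
      (Filter.Eventually.of_forall fun g => le_max_right _ _)
  refine le_of_forall_pos_le_add fun ε hε => ?_
  have hcobdd : IsCoboundedUnder (· ≤ ·) atTop (fun n => ∫ g, fseq n g ∂μ) :=
    isCoboundedUnder_le_of_le atTop hseq_nonneg
  refine limsup_le_of_le hcobdd ?_
  -- eventually a n ≤ A + ε/2
  have hev_a : ∀ᶠ n in atTop, ∫ g, max (fseq n g) 0 ∂μ ≤ A + ε / 2 := by
    exact hA.eventually_le_const (lt_add_of_pos_right A (by linarith))
  -- eventually B - ε/2 ≤ b n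
  have hev_b : ∀ᶠ n in atTop, B - ε / 2 ≤ ∫ g, max (-fseq n g) 0 ∂μ := by
    by_cases hB0 : B - ε / 2 ≤ 0
    · exact Filter.Eventually.of_forall fun n => hB0.trans (hb_nonneg n)
    · push_neg at hB0
      by_contra hnot
      rw [Filter.not_eventually] at hnot
      have hfreq : ∃ᶠ n in atTop,
          ENNReal.ofReal (∫ g, max (-fseq n g) 0 ∂μ) ≤ ENNReal.ofReal (B - ε / 2) :=
        hnot.mono fun n hn => ENNReal.ofReal_le_ofReal (not_le.1 hn).le
      have h1 : liminf (fun n => ENNReal.ofReal (∫ g, max (-fseq n g) 0 ∂μ)) atTop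
          ≤ ENNReal.ofReal (B - ε / 2) := liminf_le_of_frequently_le' hfreq
      have h2 : ENNReal.ofReal B ≤ ENNReal.ofReal (B - ε / 2) :=
        (hBofReal.le.trans hfatou).trans h1
      have h3 : B ≤ B - ε / 2 := by
        rwa [ENNReal.ofReal_le_ofReal_iff hB0.le] at h2
      linarith
  filter_upwards [hev_a, hev_b] with n h1 h2
  rw [hsplit n, hintf]
  linarith
end
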